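/- The function Q(q) = 2E(q) − K(q) is strictly decreasing on [0,1), satisfies Q(0) = π/2 · 1 > 0 (indeed Q(0) = π/2), tends to −∞ as q → 1⁻, and hence there exists a unique q* ∈ (0,1) with 2E(q*) = K(q*). -/

import Mathlib

open Real Set Filter

noncomputable def Kc (q : ℝ) : ℝ := ∫ θ in (0:ℝ)..(π/2), 1 / Real.sqrt (1 - q^2 * Real.sin θ^2)

noncomputable def Ec (q : ℝ) : ℝ := ∫ θ in (0:ℝ)..(π/2), Real.sqrt (1 - q^2 * Real.sin θ^2)

noncomputable def fc (q : ℝ) : ℝ := (4*q^4 - 5*q^2 + 1) * Kc q + (-8*q^4 + 8*q^2 - 1) * Ec q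

lemma base_pos {q : ℝ} (hq : q^2 < 1) (θ : ℝ) : 0 < 1 - q^2 * Real.sin θ^2 := by
  nlinarith [Real.sin_sq_le_one θ, sq_nonneg q, sq_nonneg (Real.sin θ)]

lemma base_le_one (q θ : ℝ) : 1 - q^2 * Real.sin θ^2 ≤ 1 := by
  nlinarith [sq_nonneg q, sq_nonneg (Real.sin θ)]

lemma contE (q : ℝ) : Continuous (fun θ : ℝ => Real.sqrt (1 - q^2 * Real.sin θ^2)) := by
  fun_prop

lemma contK {q : ℝ} (hq : q^2 < 1) :
    Continuous (fun θ : ℝ => 1 / Real.sqrt (1 - q^2 * Real.sin θ^2)) := by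
  apply Continuous.div continuous_const (contE q)
  intro θ
  exact (Real.sqrt_pos.2 (base_pos hq θ)).ne'

lemma intE (q : ℝ) :
    IntervalIntegrable (fun θ : ℝ => Real.sqrt (1 - q^2 * Real.sin θ^2)) MeasureTheory.volume 0 (π/2) :=
  (contE q).intervalIntegrable _ _

lemma intK {q : ℝ} (hq : q^2 < 1) :
    IntervalIntegrable (fun θ : ℝ => 1 / Real.sqrt (1 - q^2 * Real.sin θ^2)) MeasureTheory.volume 0 (π/2) :=
  (contK hq).intervalIntegrable _ _

lemma D_eq {q : ℝ} (hq : q^2 < 1) :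
    2 * Ec q - Kc q
      = ∫ θ in (0:ℝ)..(π/2),
          (2 * Real.sqrt (1 - q^2 * Real.sin θ^2) - 1 / Real.sqrt (1 - q^2 * Real.sin θ^2)) := by
  rw [Ec, Kc, intervalIntegral.integral_sub ((intE q).const_mul 2) (intK hq),
    intervalIntegral.integral_const_mul]

/-- the combined integrand is monotone in the base -/
lemma g_mono {a b : ℝ} (ha : 0 < a) (hab : a ≤ b) :
    2 * Real.sqrt a - 1 / Real.sqrt a ≤ 2 * Real.sqrt b - 1 / Real.sqrt b := by
  have h1 : Real.sqrt a ≤ Real.sqrt b := Real.sqrt_le_sqrt hab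
  have h2 : (0:ℝ) < Real.sqrt a := Real.sqrt_pos.2 ha
  have h3 : 1 / Real.sqrt b ≤ 1 / Real.sqrt a := one_div_le_one_div_of_le h2 h1
  linarith

lemma g_strict {a b : ℝ} (ha : 0 < a) (hab : a < b) :
    2 * Real.sqrt a - 1 / Real.sqrt a < 2 * Real.sqrt b - 1 / Real.sqrt b := by
  have h1 : Real.sqrt a < Real.sqrt b := Real.sqrt_lt_sqrt ha.le hab
  have h2 : (0:ℝ) < Real.sqrt a := Real.sqrt_pos.2 ha
  have h3 : 1 / Real.sqrt b < 1 / Real.sqrt a := one_div_lt_one_div_of_lt h2 h1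
  linarith

lemma strict_anti : StrictAntiOn (fun q => 2 * Ec q - Kc q) (Ico (0:ℝ) 1) := by
  rintro p ⟨hp0, hp1⟩ q ⟨hq0, hq1⟩ hpq
  have hp2 : p^2 < 1 := by nlinarith
  have hq2 : q^2 < 1 := by nlinarith
  simp only
  rw [D_eq hp2, D_eq hq2]
  apply intervalIntegral.integral_lt_integral_of_continuousOn_of_le_of_exists_lt
    (by positivity)
  · exact ((continuous_const.mul (contE q)).sub (contK hq2)).continuousOn
  · exact ((continuous_const.mul (contE p)).sub (contK hp2)).continuousOn
  · intro θ _
    have hpq2 : p^2 ≤ q^2 := by nlinarith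
    have := mul_le_mul_of_nonneg_right hpq2 (sq_nonneg (Real.sin θ))
    exact g_mono (base_pos hq2 θ) (by linarith)
  · refine ⟨π/2, ⟨by positivity, le_refl _⟩, ?_⟩
    have : Real.sin (π/2) = 1 := Real.sin_pi_div_two
    rw [this]
    exact g_strict (by nlinarith) (by nlinarith)

lemma K0 : Kc 0 = π/2 := by
  simp [Kc]

lemma E0 : Ec 0 = π/2 := by
  simp [Ec]

lemma Ec_le (q : ℝ) : Ec q ≤ π/2 := by
  have : Ec q ≤ ∫ _ in (0:ℝ)..(π/2), (1:ℝ) := by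
    apply intervalIntegral.integral_mono_on (by positivity) (intE q)
      intervalIntegrable_const
    intro θ _
    exact Real.sqrt_le_one.2 (base_le_one q θ)
  simpa using this

/-- lower bound for Kc -/
lemma Kc_ge {q : ℝ} (hq : q^2 < 1) :
    Real.log (Real.sqrt (1 - q^2) + π/2) - Real.log (Real.sqrt (1 - q^2)) ≤ Kc q := by
  set c := Real.sqrt (1 - q^2) with hc
  have hcpos : 0 < c := Real.sqrt_pos.2 (by linarith)
  -- pointwise bound on [0, π/2]
  have key : ∀ θ ∈ Icc (0:ℝ) (π/2), (c + (π/2 - θ))⁻¹ ≤ 1 / Real.sqrt (1 - q^2 * Real.sin θ^2) := by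
    intro θ ⟨h0, h2⟩
    have hcos : Real.cos θ ≤ π/2 - θ := by
      have := Real.sin_le (x := π/2 - θ) (by linarith)
      rwa [Real.sin_pi_div_two_sub] at this
    have hcos0 : 0 ≤ Real.cos θ := Real.cos_nonneg_of_mem_Icc ⟨by linarith, h2⟩
    have hbase : 1 - q^2 * Real.sin θ^2 ≤ (c + (π/2 - θ))^2 := by
      have hs : Real.sin θ^2 = 1 - Real.cos θ^2 := by
        have := Real.sin_sq_add_cos_sq θ; linarith
      have hc2 : c^2 = 1 - q^2 := Real.sq_sqrt (by linarith)
      nlinarith [sq_nonneg (Real.sin θ), sq_nonneg q, mul_nonneg hcpos.le (sub_nonneg.2 h2)]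
    have hsq : Real.sqrt (1 - q^2 * Real.sin θ^2) ≤ c + (π/2 - θ) := by
      calc Real.sqrt (1 - q^2 * Real.sin θ^2) ≤ Real.sqrt ((c + (π/2 - θ))^2) :=
            Real.sqrt_le_sqrt hbase
        _ = c + (π/2 - θ) := Real.sqrt_sq (by linarith)
    rw [one_div]
    exact inv_anti₀ (Real.sqrt_pos.2 (base_pos hq θ)) hsq
  have hcont : ContinuousOn (fun θ : ℝ => (c + (π/2 - θ))⁻¹) (Set.uIcc 0 (π/2)) := by
    apply ContinuousOn.inv₀ (by fun_prop)
    intro θ hθ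
    rw [Set.uIcc_of_le (by positivity)] at hθ
    have := hθ.2
    intro h; linarith
  have hint : IntervalIntegrable (fun θ : ℝ => (c + (π/2 - θ))⁻¹) MeasureTheory.volume 0 (π/2) :=
    hcont.intervalIntegrable
  have hval : (∫ θ in (0:ℝ)..(π/2), (c + (π/2 - θ))⁻¹)
      = Real.log (c + π/2) - Real.log c := by
    have : ∀ θ ∈ Set.uIcc (0:ℝ) (π/2),
        HasDerivAt (fun x : ℝ => -Real.log (c + (π/2 - x))) ((c + (π/2 - θ))⁻¹) θ := by
      intro θ hθ
      rw [Set.uIcc_of_le (by positivity)] at hθ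
      have hne : c + (π/2 - θ) ≠ 0 := by have := hθ.2; intro h; linarith
      have h1 : HasDerivAt (fun x : ℝ => c + (π/2 - x)) (-1) θ := by
        simpa using ((hasDerivAt_id θ).const_sub (π/2)).const_add c
      have := (Real.hasDerivAt_log hne).comp θ h1
      have h2 := this.neg
      convert h2 using 1
      · rfl
      · rfl
      · rfl
      · ring
    have := intervalIntegral.integral_eq_sub_of_hasDerivAt this hint
    rw [this]
    ring_nf
  calc Real.log (c + π/2) - Real.log c
      = ∫ θ in (0:ℝ)..(π/2), (c + (π/2 - θ))⁻¹ := hval.symm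
    _ ≤ Kc q := by
        apply intervalIntegral.integral_mono_on (by positivity) hint (intK hq)
        intro θ hθ
        exact key θ hθ

lemma Kc_tendsto : Tendsto Kc (nhdsWithin 1 (Iio (1:ℝ))) atTop := by
  have hsq : Tendsto (fun q : ℝ => Real.sqrt (1 - q^2)) (nhdsWithin 1 (Iio 1))
      (nhdsWithin 0 (Ioi 0)) := by
    rw [tendsto_nhdsWithin_iff]
    constructor
    · have : Tendsto (fun q : ℝ => Real.sqrt (1 - q^2)) (nhds 1) (nhds (Real.sqrt (1 - 1^2))) :=
        Continuous.tendsto (by continuity) 1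
      simpa using this.mono_left nhdsWithin_le_nhds
    · filter_upwards [self_mem_nhdsWithin,
        eventually_nhdsWithin_of_eventually_nhds (eventually_gt_nhds (by norm_num : (0:ℝ) < 1))]
        with q hq1 hq0
      have : q^2 < 1 := by nlinarith [mem_Iio.1 hq1]
      exact Real.sqrt_pos.2 (by linarith)
  have hlog1 : Tendsto (fun q : ℝ => Real.log (Real.sqrt (1 - q^2))) (nhdsWithin 1 (Iio 1)) atBot :=
    Real.tendsto_log_nhdsGT_zero.comp hsq
  have hlog2 : Tendsto (fun q : ℝ => Real.log (Real.sqrt (1 - q^2) + π/2)) (nhdsWithin 1 (Iio 1))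
      (nhds (Real.log (π/2))) := by
    have h0 : Tendsto (fun q : ℝ => Real.sqrt (1 - q^2) + π/2) (nhdsWithin 1 (Iio 1))
        (nhds (π/2)) := by
      have := (hsq.mono_right nhdsWithin_le_nhds).add (tendsto_const_nhds (x := π/2))
      simpa using this
    exact (Real.continuousAt_log (by positivity)).tendsto.comp h0
  have hL : Tendsto (fun q : ℝ => Real.log (Real.sqrt (1 - q^2) + π/2)
      - Real.log (Real.sqrt (1 - q^2))) (nhdsWithin 1 (Iio 1)) atTop := by
    have := hlog2.add_atTop (tendsto_neg_atBot_atTop.comp hlog1)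
    simpa [sub_eq_add_neg, Function.comp] using this
  apply tendsto_atTop_mono' _ _ hL
  filter_upwards [self_mem_nhdsWithin,
    eventually_nhdsWithin_of_eventually_nhds (eventually_gt_nhds (by norm_num : (0:ℝ) < 1))]
    with q hq1 hq0
  exact Kc_ge (by nlinarith [mem_Iio.1 hq1])

lemma D_tendsto : Tendsto (fun q => 2 * Ec q - Kc q) (nhdsWithin 1 (Iio (1:ℝ))) atBot := by
  have h1 : Tendsto (fun q : ℝ => π + -(Kc q)) (nhdsWithin 1 (Iio (1:ℝ))) atBot := by
    apply tendsto_atBot_add_const_left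
    exact tendsto_neg_atTop_atBot.comp Kc_tendsto
  apply tendsto_atBot_mono' _ _ h1
  filter_upwards with q
  have := Ec_le q
  simp only [neg_sub, ge_iff_le]
  linarith

theorem stmt_3 :
    StrictAntiOn (fun q => 2 * Ec q - Kc q) (Ico (0:ℝ) 1) ∧
    2 * Ec 0 - Kc 0 = π / 2 ∧
    Tendsto (fun q => 2 * Ec q - Kc q) (nhdsWithin 1 (Iio (1:ℝ))) atBot ∧
    ∃! q : ℝ, q ∈ Ioo (0:ℝ) 1 ∧ 2 * Ec q = Kc q := by
  have hD0 : 2 * Ec 0 - Kc 0 = π/2 := by rw [E0, K0]; ring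
  refine ⟨strict_anti, hD0, D_tendsto, ?_⟩
  -- continuity on Ico 0 1
  have hcontD : ContinuousOn (fun q => 2 * Ec q - Kc q) (Ico (0:ℝ) 1) := by
    intro q₀ hq₀
    apply ContinuousAt.continuousWithinAt
    have habs : |q₀| < 1 := by
      rw [abs_lt]; exact ⟨by linarith [hq₀.1], hq₀.2⟩
    set r : ℝ := (|q₀| + 1)/2 with hr
    have hr0 : 0 ≤ r := by positivity
    have hr1 : r < 1 := by rw [hr]; linarith
    have hqr : |q₀| < r := by rw [hr]; linarith
    have hev : ∀ᶠ q in nhds q₀, |q| ≤ r := by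
      have : ∀ᶠ q in nhds q₀, |q| < r := by
        have hc : ContinuousAt (fun q : ℝ => |q|) q₀ := continuous_abs.continuousAt
        exact hc.eventually_lt continuousAt_const hqr
      exact this.mono fun q h => h.le
    have hr2pos : (0:ℝ) < 1 - r^2 := by nlinarith
    have hbound : ∀ q : ℝ, |q| ≤ r → ∀ θ : ℝ, 1 - r^2 ≤ 1 - q^2 * Real.sin θ^2 := by
      intro q hq θ
      have h1 : q^2 ≤ r^2 := by
        rw [← sq_abs q, ← sq_abs r, abs_of_nonneg hr0]
        exact pow_le_pow_left₀ (abs_nonneg q) hq 2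
      nlinarith [Real.sin_sq_le_one θ, sq_nonneg (Real.sin θ)]
    have hq₀2 : q₀^2 < 1 := by
      rw [← sq_abs q₀]; nlinarith [abs_nonneg q₀]
    have hKcont : ContinuousAt Kc q₀ := by
      have : ContinuousAt
          (fun q => ∫ θ in (0:ℝ)..(π/2), 1 / Real.sqrt (1 - q^2 * Real.sin θ^2)) q₀ := by
        apply intervalIntegral.continuousAt_of_dominated_interval
          (bound := fun _ => 1 / Real.sqrt (1 - r^2))
        · filter_upwards [hev] with q hq
          have hq2 : q^2 < 1 := by rw [← sq_abs q]; nlinarith [abs_nonneg q]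
          exact (contK hq2).aestronglyMeasurable
        · filter_upwards [hev] with q hq
          apply MeasureTheory.ae_of_all
          intro θ _
          have h1 := hbound q hq θ
          have h2 : (0:ℝ) < 1 - q^2 * Real.sin θ^2 := lt_of_lt_of_le hr2pos h1
          rw [Real.norm_eq_abs, abs_of_nonneg (by positivity)]
          exact one_div_le_one_div_of_le (Real.sqrt_pos.2 hr2pos) (Real.sqrt_le_sqrt h1)
        · exact intervalIntegrable_const
        · apply MeasureTheory.ae_of_all
          intro θ _
          apply ContinuousAt.div continuousAt_const
          · exact Real.continuous_sqrt.continuousAt.comp (by fun_prop)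
          · exact (Real.sqrt_pos.2 (base_pos hq₀2 θ)).ne'
      exact this
    have hEcont : ContinuousAt Ec q₀ := by
      have : ContinuousAt
          (fun q => ∫ θ in (0:ℝ)..(π/2), Real.sqrt (1 - q^2 * Real.sin θ^2)) q₀ := by
        apply intervalIntegral.continuousAt_of_dominated_interval (bound := fun _ => (1:ℝ))
        · filter_upwards with q
          exact (contE q).aestronglyMeasurable
        · filter_upwards with q
          apply MeasureTheory.ae_of_all
          intro θ _
          rw [Real.norm_eq_abs, abs_of_nonneg (Real.sqrt_nonneg _)]
          exact Real.sqrt_le_one.2 (base_le_one q θ)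
        · exact intervalIntegrable_const
        · apply MeasureTheory.ae_of_all
          intro θ _
          exact Real.continuous_sqrt.continuousAt.comp (by fun_prop)
      exact this
    exact (continuousAt_const.mul hEcont).sub hKcont
  -- find a point where the function is negative
  have hneg : ∃ q1 ∈ Ioo (0:ℝ) 1, 2 * Ec q1 - Kc q1 < 0 := by
    have h1 : ∀ᶠ q in nhdsWithin 1 (Iio (1:ℝ)), 2 * Ec q - Kc q < 0 :=
      D_tendsto.eventually (eventually_lt_atBot 0)
    have h2 : ∀ᶠ q in nhdsWithin 1 (Iio (1:ℝ)), q ∈ Ioo (0:ℝ) 1 := by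
      filter_upwards [self_mem_nhdsWithin,
        eventually_nhdsWithin_of_eventually_nhds (eventually_gt_nhds (by norm_num : (0:ℝ) < 1))]
        with q hq1 hq0
      exact ⟨hq0, hq1⟩
    obtain ⟨q1, hmem, hlt⟩ := (h2.and h1).exists
    exact ⟨q1, hmem, hlt⟩
  obtain ⟨q1, hq1mem, hq1neg⟩ := hneg
  have hIcc : Icc (0:ℝ) q1 ⊆ Ico 0 1 := fun x hx => ⟨hx.1, lt_of_le_of_lt hx.2 hq1mem.2⟩
  have hivt := intermediate_value_Ioo' (le_of_lt hq1mem.1) (hcontD.mono hIcc)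
  have h0mem : (0:ℝ) ∈ Ioo ((fun q => 2 * Ec q - Kc q) q1) ((fun q => 2 * Ec q - Kc q) 0) := by
    refine ⟨hq1neg, ?_⟩
    simp only [hD0]
    positivity
  obtain ⟨c, hc, hceq⟩ := hivt h0mem
  simp only at hceq
  have hcIco : c ∈ Ico (0:ℝ) 1 := ⟨hc.1.le, hc.2.trans hq1mem.2⟩
  refine ⟨c, ⟨⟨hc.1, hc.2.trans hq1mem.2⟩, by linarith⟩, ?_⟩
  rintro y ⟨hy, hyeq⟩
  have hyD : 2 * Ec y - Kc y = 0 := by linarith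
  exact strict_anti.injOn ⟨hy.1.le, hy.2⟩ hcIco (by simp only [hyD, hceq])
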